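/- Suppose K is closed at infinity and there exists some polynomial in ℝ[x]_A lying in the interior of P_d(K), where d = deg(A). Then p ∈ int(P_A(K)) if and only if the degree-d homogenization p̂ of p is strictly positive on the compact set K̃. -/

import Mathlib

open MvPolynomial

/-- Evaluation at `(x₀, x)` of the homogenization `p̃(x₀,x) = x₀^{deg p} p(x/x₀)` of `p`,
given by `∑_α p_α x₀^{deg p − |α|} x^α`. -/
noncomputable def homEval {n : ℕ} (p : MvPolynomial (Fin n) ℝ) (x₀ : ℝ) (x : Fin n → ℝ) : ℝ :=
  ∑ α ∈ p.support, p.coeff α * x₀ ^ (p.totalDegree - α.sum fun _ e => e) * ∏ i, x i ^ α i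

/-- The semialgebraic set `K = {x : c_i(x) = 0 (i ∈ E), c_j(x) ≥ 0 (j ∈ I)}`. -/
def semiSet {n : ℕ} {ι : Type*} (E I : Set ι) (g : ι → MvPolynomial (Fin n) ℝ) :
    Set (Fin n → ℝ) :=
  {x | (∀ i ∈ E, eval x (g i) = 0) ∧ (∀ j ∈ I, 0 ≤ eval x (g j))}

/-- The homogenized cone `K̃^c` with strictly positive `x₀`-coordinate. -/
def tildeC {n : ℕ} {ι : Type*} (E I : Set ι) (g : ι → MvPolynomial (Fin n) ℝ) :
    Set (ℝ × (Fin n → ℝ)) :=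
  {z | 0 < z.1 ∧ (∀ i ∈ E, homEval (g i) z.1 z.2 = 0) ∧ (∀ j ∈ I, 0 ≤ homEval (g j) z.1 z.2)}

/-- The homogenized cone `K̃^h` with nonnegative `x₀`-coordinate. -/
def tildeH {n : ℕ} {ι : Type*} (E I : Set ι) (g : ι → MvPolynomial (Fin n) ℝ) :
    Set (ℝ × (Fin n → ℝ)) :=
  {z | 0 ≤ z.1 ∧ (∀ i ∈ E, homEval (g i) z.1 z.2 = 0) ∧ (∀ j ∈ I, 0 ≤ homEval (g j) z.1 z.2)}

/-- `K` is closed at infinity: `cl(K̃^c) = K̃^h`. -/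
def closedAtInfty {n : ℕ} {ι : Type*} (E I : Set ι) (g : ι → MvPolynomial (Fin n) ℝ) : Prop :=
  closure (tildeC E I g) = tildeH E I g

/-- The compact homogenized set `K̃ = K̃^h ∩ {x₀² + ‖x‖² = 1}`. -/
def tildeK {n : ℕ} {ι : Type*} (E I : Set ι) (g : ι → MvPolynomial (Fin n) ℝ) :
    Set (ℝ × (Fin n → ℝ)) :=
  tildeH E I g ∩ {z | z.1 ^ 2 + ∑ i, z.2 i ^ 2 = 1}

/-- The monomial `x^α`. -/
noncomputable def mono {n : ℕ} (α : Fin n → ℕ) (x : Fin n → ℝ) : ℝ := ∏ i, x i ^ α i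

/-- The exponents of the monomials of total degree at most `d` in `n` variables. -/
def expSet (n d : ℕ) : Finset (Fin n → ℕ) :=
  (Fintype.piFinset fun _ : Fin n => Finset.range (d + 1)).filter fun α => ∑ i, α i ≤ d

/-- The polynomial in `ℝ[x]_d` with coefficient vector `c`. -/
noncomputable def polyD {n d : ℕ} (c : expSet n d → ℝ) (x : Fin n → ℝ) : ℝ :=
  ∑ α : expSet n d, c α * mono (α : Fin n → ℕ) x

/-- The degree-`d` homogeneous part `p^{(d)}` of the polynomial with coefficients `c`. -/
noncomputable def topPartD {n d : ℕ} (c : expSet n d → ℝ) (x : Fin n → ℝ) : ℝ :=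
  ∑ α : expSet n d,
    if (∑ i, (α : Fin n → ℕ) i) = d then c α * mono (α : Fin n → ℕ) x else 0

/-- The set `K^e` of directions at infinity: common zeros/nonnegativity of the top-degree
homogeneous parts of the constraints, on the unit sphere. -/
def dirSet {n : ℕ} {ι : Type*} (E I : Set ι) (g : ι → MvPolynomial (Fin n) ℝ) :
    Set (Fin n → ℝ) :=
  {x | (∀ i ∈ E, eval x (homogeneousComponent (g i).totalDegree (g i)) = 0) ∧
       (∀ j ∈ I, 0 ≤ eval x (homogeneousComponent (g j).totalDegree (g j))) ∧
       ∑ i, x i ^ 2 = 1}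


/-- The polynomial with coefficient vector `c` supported on the finite power set `A`. -/
noncomputable def polyA {n : ℕ} (A : Finset (Fin n → ℕ)) (c : A → ℝ) (x : Fin n → ℝ) : ℝ :=
  ∑ α : A, c α * mono (α : Fin n → ℕ) x

/-- Evaluation at `(x₀,x)` of the degree-`d` homogenization `p̂(x₀,x) = x₀^d p(x/x₀)`
of the polynomial with coefficients `c` supported on `A`. -/
noncomputable def hatEval {n : ℕ} (A : Finset (Fin n → ℕ)) (d : ℕ) (c : A → ℝ)
    (x₀ : ℝ) (x : Fin n → ℝ) : ℝ :=
  ∑ α : A, c α * x₀ ^ (d - ∑ i, (α : Fin n → ℕ) i) * mono (α : Fin n → ℕ) x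

section aux
variable {n d : ℕ} {ι : Type*} (E I : Set ι) (g : ι → MvPolynomial (Fin n) ℝ)
  (A : Finset (Fin n → ℕ))

-- polyD is polyA on expSet
lemma polyD_eq (c : expSet n d → ℝ) : polyD c = polyA (expSet n d) c := rfl

lemma mono_smul (α : Fin n → ℕ) (t : ℝ) (x : Fin n → ℝ) :
    mono α (t • x) = t ^ (∑ i, α i) * mono α x := by
  unfold mono
  simp only [Pi.smul_apply, smul_eq_mul, mul_pow]
  rw [Finset.prod_mul_distrib, Finset.prod_pow_eq_pow_sum]

lemma hatEval_scale (hdeg : ∀ α ∈ A, ∑ i, α i ≤ d) (c : A → ℝ) (t : ℝ) (x : Fin n → ℝ) :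
    hatEval A d c t (t • x) = t ^ d * polyA A c x := by
  unfold hatEval polyA
  rw [Finset.mul_sum]
  refine Finset.sum_congr rfl fun α _ => ?_
  rw [mono_smul]
  have h : (d - ∑ i, (α : Fin n → ℕ) i) + ∑ i, (α : Fin n → ℕ) i = d :=
    Nat.sub_add_cancel (hdeg _ α.2)
  calc c α * t ^ (d - ∑ i, (α : Fin n → ℕ) i) * (t ^ (∑ i, (α : Fin n → ℕ) i) * mono _ x)
      = c α * t ^ ((d - ∑ i, (α : Fin n → ℕ) i) + ∑ i, (α : Fin n → ℕ) i) * mono _ x := by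
        rw [pow_add]; ring
    _ = t ^ d * (c α * mono _ x) := by rw [h]; ring

lemma homEval_scale (p : MvPolynomial (Fin n) ℝ) (t : ℝ) (x : Fin n → ℝ) :
    homEval p t (t • x) = t ^ p.totalDegree * eval x p := by
  unfold homEval
  rw [eval_eq', Finset.mul_sum]
  refine Finset.sum_congr rfl fun α hα => ?_
  have hs : (α.sum fun _ e => e) = ∑ i, α i := Finsupp.sum_fintype _ _ (fun _ => rfl)
  have hle : (α.sum fun _ e => e) ≤ p.totalDegree := le_totalDegree hα
  have h : (p.totalDegree - α.sum fun _ e => e) + (α.sum fun _ e => e) = p.totalDegree :=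
    Nat.sub_add_cancel hle
  have hprod : (∏ i, (t • x) i ^ α i) = t ^ (α.sum fun _ e => e) * ∏ i, x i ^ α i := by
    rw [hs]
    simpa [mono] using mono_smul (fun i => α i) t x
  rw [hprod]
  calc p.coeff α * t ^ (p.totalDegree - α.sum fun _ e => e)
        * (t ^ (α.sum fun _ e => e) * ∏ i, x i ^ α i)
      = p.coeff α * t ^ ((p.totalDegree - α.sum fun _ e => e) + (α.sum fun _ e => e))
        * ∏ i, x i ^ α i := by rw [pow_add]; ring
    _ = t ^ p.totalDegree * (p.coeff α * ∏ i, x i ^ α i) := by rw [h]; ring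

lemma mem_tildeC_of_mem {x : Fin n → ℝ} (hx : x ∈ semiSet E I g) {t : ℝ} (ht : 0 < t) :
    (t, t • x) ∈ tildeC E I g := by
  refine ⟨ht, fun i hi => ?_, fun j hj => ?_⟩
  · show homEval (g i) t (t • x) = 0
    rw [homEval_scale, hx.1 i hi, mul_zero]
  · show 0 ≤ homEval (g j) t (t • x)
    rw [homEval_scale]
    exact mul_nonneg (pow_nonneg ht.le _) (hx.2 j hj)

lemma mem_semiSet_of_tildeC {z : ℝ × (Fin n → ℝ)} (hz : z ∈ tildeC E I g) :
    z.1⁻¹ • z.2 ∈ semiSet E I g := by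
  obtain ⟨ht, he, hi⟩ := hz
  have hz2 : z.1 • (z.1⁻¹ • z.2) = z.2 := smul_inv_smul₀ ht.ne' z.2
  constructor
  · intro i hii
    have := he i hii
    rw [show z.2 = z.1 • (z.1⁻¹ • z.2) from hz2.symm, homEval_scale] at this
    rcases mul_eq_zero.mp this with h | h
    · exact absurd h (pow_ne_zero _ ht.ne')
    · exact h
  · intro j hj
    have := hi j hj
    rw [show z.2 = z.1 • (z.1⁻¹ • z.2) from hz2.symm, homEval_scale] at this
    exact (mul_nonneg_iff_of_pos_left (pow_pos ht _)).mp this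

lemma continuous_hatEval (c : A → ℝ) :
    Continuous (fun z : ℝ × (Fin n → ℝ) => hatEval A d c z.1 z.2) := by
  unfold hatEval mono
  refine continuous_finset_sum _ fun α _ => ?_
  exact ((continuous_const.mul (continuous_fst.pow _)).mul
    (continuous_finset_prod _ fun i _ => ((continuous_apply i).comp continuous_snd).pow _))

lemma hat_nonneg_on_tildeH (hdeg : ∀ α ∈ A, ∑ i, α i ≤ d)
    (hinf : closedAtInfty E I g) (c : A → ℝ)
    (hc : ∀ x ∈ semiSet E I g, 0 ≤ polyA A c x) :
    ∀ z ∈ tildeH E I g, 0 ≤ hatEval A d c z.1 z.2 := by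
  have hcl : IsClosed {z : ℝ × (Fin n → ℝ) | 0 ≤ hatEval A d c z.1 z.2} :=
    isClosed_le continuous_const (continuous_hatEval A c)
  have hsub : tildeC E I g ⊆ {z : ℝ × (Fin n → ℝ) | 0 ≤ hatEval A d c z.1 z.2} := by
    intro z hz
    have hy := mem_semiSet_of_tildeC E I g hz
    have hz2 : z.1 • (z.1⁻¹ • z.2) = z.2 := smul_inv_smul₀ hz.1.ne' z.2
    show 0 ≤ hatEval A d c z.1 z.2
    rw [show z.2 = z.1 • (z.1⁻¹ • z.2) from hz2.symm, hatEval_scale A hdeg]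
    exact mul_nonneg (pow_nonneg hz.1.le _) (hc _ hy)
  intro z hz
  rw [← hinf] at hz
  exact hcl.closure_subset_iff.mpr hsub hz

lemma hatEval_add (c v : A → ℝ) (x₀ : ℝ) (x : Fin n → ℝ) :
    hatEval A d (c + v) x₀ x = hatEval A d c x₀ x + hatEval A d v x₀ x := by
  unfold hatEval
  rw [← Finset.sum_add_distrib]
  exact Finset.sum_congr rfl fun α _ => by simp [add_mul]

lemma hatEval_smulc (t : ℝ) (v : A → ℝ) (x₀ : ℝ) (x : Fin n → ℝ) :
    hatEval A d (t • v) x₀ x = t * hatEval A d v x₀ x := by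
  unfold hatEval
  rw [Finset.mul_sum]
  exact Finset.sum_congr rfl fun α _ => by simp [mul_assoc]

lemma hatEval_zero (x₀ : ℝ) (x : Fin n → ℝ) : hatEval A d (0 : A → ℝ) x₀ x = 0 := by
  unfold hatEval; simp

end aux

section aux2
variable {n d : ℕ} {ι : Type*} (E I : Set ι) (g : ι → MvPolynomial (Fin n) ℝ)
  (A : Finset (Fin n → ℕ))

lemma tildeK_bounds {z : ℝ × (Fin n → ℝ)} (hz : z ∈ tildeK E I g) :
    |z.1| ≤ 1 ∧ ∀ i, |z.2 i| ≤ 1 := by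
  have hsum : z.1 ^ 2 + ∑ i, z.2 i ^ 2 = 1 := hz.2
  have h1 : z.1 ^ 2 ≤ 1 := by
    nlinarith [Finset.sum_nonneg (fun i (_ : i ∈ Finset.univ) => sq_nonneg (z.2 i))]
  have habs : ∀ a : ℝ, a ^ 2 ≤ 1 → |a| ≤ 1 := fun a ha =>
    abs_le.mpr ⟨by nlinarith, by nlinarith⟩
  refine ⟨habs _ h1, fun i => ?_⟩
  have h2 : z.2 i ^ 2 ≤ ∑ j, z.2 j ^ 2 :=
    Finset.single_le_sum (fun j _ => sq_nonneg (z.2 j)) (Finset.mem_univ i)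
  exact habs _ (by nlinarith [sq_nonneg z.1])

lemma isCompact_tildeK (hinf : closedAtInfty E I g) : IsCompact (tildeK E I g) := by
  rw [Metric.isCompact_iff_isClosed_bounded]
  constructor
  · apply IsClosed.inter
    · rw [← hinf]; exact isClosed_closure
    · exact isClosed_eq (by fun_prop) continuous_const
  · rw [Metric.isBounded_iff_subset_closedBall 0]
    refine ⟨1, fun z hz => ?_⟩
    obtain ⟨h1, h2⟩ := tildeK_bounds E I g hz
    rw [Metric.mem_closedBall, dist_zero_right]
    rw [Prod.norm_def]
    refine max_le (by simpa [Real.norm_eq_abs] using h1) ?_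
    refine (pi_norm_le_iff_of_nonneg zero_le_one).mpr fun i => ?_
    simpa [Real.norm_eq_abs] using h2 i

lemma abs_term_le {z : ℝ × (Fin n → ℝ)} (hz : z ∈ tildeK E I g) (α : Fin n → ℕ) (k : ℕ) :
    |z.1 ^ k * mono α z.2| ≤ 1 := by
  obtain ⟨h1, h2⟩ := tildeK_bounds E I g hz
  rw [abs_mul]
  have ha : |z.1 ^ k| ≤ 1 := by rw [abs_pow]; exact pow_le_one₀ (abs_nonneg _) h1
  have hb : |mono α z.2| ≤ 1 := by
    unfold mono
    rw [Finset.abs_prod]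
    refine Finset.prod_le_one (fun i _ => abs_nonneg _) fun i _ => ?_
    rw [abs_pow]; exact pow_le_one₀ (abs_nonneg _) (h2 i)
  calc |z.1 ^ k| * |mono α z.2| ≤ 1 * 1 :=
        mul_le_mul ha hb (abs_nonneg _) zero_le_one
    _ = 1 := mul_one 1

lemma abs_hatEval_le {z : ℝ × (Fin n → ℝ)} (hz : z ∈ tildeK E I g) (v : A → ℝ) :
    |hatEval A d v z.1 z.2| ≤ (A.card : ℝ) * ‖v‖ := by
  unfold hatEval
  calc |∑ α : A, v α * z.1 ^ (d - ∑ i, (α : Fin n → ℕ) i) * mono (α : Fin n → ℕ) z.2|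
      ≤ ∑ α : A, |v α * z.1 ^ (d - ∑ i, (α : Fin n → ℕ) i) * mono (α : Fin n → ℕ) z.2| :=
        Finset.abs_sum_le_sum_abs _ _
    _ ≤ ∑ _α : A, ‖v‖ := by
        refine Finset.sum_le_sum fun α _ => ?_
        rw [mul_assoc, abs_mul]
        calc |v α| * |z.1 ^ _ * mono _ z.2| ≤ ‖v‖ * 1 := by
              refine mul_le_mul ?_ (abs_term_le E I g hz _ _) (abs_nonneg _) (norm_nonneg _)
              exact (norm_le_pi_norm v α)
          _ = ‖v‖ := mul_one _
    _ = (A.card : ℝ) * ‖v‖ := by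
        rw [Finset.sum_const, nsmul_eq_mul]
        simp

end aux2

section aux3
variable {n d : ℕ} {ι : Type*} (E I : Set ι) (g : ι → MvPolynomial (Fin n) ℝ)
  (A : Finset (Fin n → ℕ))

lemma int_pos (hdeg : ∀ α ∈ A, ∑ i, α i ≤ d) (hinf : closedAtInfty E I g)
    {c : A → ℝ} (hc : c ∈ interior {c' : A → ℝ | ∀ x ∈ semiSet E I g, 0 ≤ polyA A c' x})
    {z : ℝ × (Fin n → ℝ)} (hz : z ∈ tildeK E I g)
    (w : A → ℝ) (hw : hatEval A d w z.1 z.2 ≠ 0) :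
    0 < hatEval A d c z.1 z.2 := by
  obtain ⟨ε, hε, hball⟩ := Metric.mem_nhds_iff.mp (mem_interior_iff_mem_nhds.mp hc)
  have hzH : z ∈ tildeH E I g := hz.1
  have hnonneg : ∀ c' ∈ Metric.ball c ε, 0 ≤ hatEval A d c' z.1 z.2 := fun c' hc' =>
    hat_nonneg_on_tildeH E I g A hdeg hinf c' (hball hc') z hzH
  have hc0 : 0 ≤ hatEval A d c z.1 z.2 := hnonneg c (Metric.mem_ball_self hε)
  rcases hc0.lt_or_eq with h | h
  · exact h
  exfalso
  -- L c = 0; show L w = 0, contradiction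
  have hwne : w ≠ 0 := by
    rintro rfl; exact hw (hatEval_zero A z.1 z.2)
  have hwn : (0:ℝ) < ‖w‖ := norm_pos_iff.mpr hwne
  set t : ℝ := ε / (2 * ‖w‖) with ht
  have htpos : 0 < t := div_pos hε (by positivity)
  have hmem : ∀ s : ℝ, |s| ≤ t → c + s • w ∈ Metric.ball c ε := by
    intro s hs
    rw [Metric.mem_ball, dist_eq_norm, add_sub_cancel_left, norm_smul]
    calc ‖s‖ * ‖w‖ ≤ t * ‖w‖ := by
          exact mul_le_mul_of_nonneg_right (by simpa [Real.norm_eq_abs] using hs) hwn.le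
      _ = ε / 2 := by field_simp [ht]; rw [ht]; field_simp
      _ < ε := by linarith
  have h1 : 0 ≤ t * hatEval A d w z.1 z.2 := by
    have := hnonneg _ (hmem t (by rw [abs_of_pos htpos]))
    rwa [hatEval_add, hatEval_smulc, ← h, zero_add] at this
  have h2 : 0 ≤ -(t * hatEval A d w z.1 z.2) := by
    have := hnonneg _ (hmem (-t) (by rw [abs_neg, abs_of_pos htpos]))
    rw [hatEval_add, hatEval_smulc, ← h, zero_add] at this
    linarith
  have : t * hatEval A d w z.1 z.2 = 0 := le_antisymm (by linarith) h1
  exact hw ((mul_eq_zero.mp this).resolve_left htpos.ne')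

lemma mem_expSet_iff (α : Fin n → ℕ) : α ∈ expSet n d ↔ (∑ i, α i ≤ d) := by
  unfold expSet
  rw [Finset.mem_filter, Fintype.mem_piFinset]
  constructor
  · exact fun h => h.2
  · intro h
    refine ⟨fun i => ?_, h⟩
    rw [Finset.mem_range, Nat.lt_succ_iff]
    exact le_trans (Finset.single_le_sum (fun j _ => Nat.zero_le (α j)) (Finset.mem_univ i)) h

lemma hdeg_expSet : ∀ α ∈ expSet n d, ∑ i, α i ≤ d := fun α h => (mem_expSet_iff α).mp h

lemma exists_witness_expSet {z : ℝ × (Fin n → ℝ)} (hz : z ∈ tildeK E I g) :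
    ∃ w : expSet n d → ℝ, hatEval (expSet n d) d w z.1 z.2 ≠ 0 := by
  have hnorm : z.1 ^ 2 + ∑ i, z.2 i ^ 2 = 1 := hz.2
  have hz1 : 0 ≤ z.1 := hz.1.1
  -- find β
  have hβ : ∃ β : Fin n → ℕ, ∃ hβ : β ∈ expSet n d,
      z.1 ^ (d - ∑ i, β i) * mono β z.2 ≠ 0 := by
    rcases hz1.lt_or_eq with hpos | hzero
    · refine ⟨0, (mem_expSet_iff 0).mpr (by simp), ?_⟩
      have : mono (0 : Fin n → ℕ) z.2 = 1 := by unfold mono; simp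
      rw [this, mul_one]
      exact (pow_pos hpos _).ne'
    · -- z.1 = 0, so some coordinate nonzero
      have hsum : ∑ i, z.2 i ^ 2 = 1 := by rw [← hzero] at hnorm; simpa using hnorm
      have : ∃ i, z.2 i ≠ 0 := by
        by_contra hcon
        push_neg at hcon
        simp [hcon] at hsum
      obtain ⟨i, hi⟩ := this
      refine ⟨fun j => if j = i then d else 0, ?_, ?_⟩
      · refine (mem_expSet_iff _).mpr ?_
        rw [Finset.sum_ite_eq' Finset.univ i (fun _ => d)]
        simp
      · have hsd : ∑ j, (if j = i then d else 0) = d := by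
          rw [Finset.sum_ite_eq' Finset.univ i (fun _ => d)]; simp
        rw [hsd, Nat.sub_self, pow_zero, one_mul]
        unfold mono
        refine Finset.prod_ne_zero_iff.mpr fun j _ => ?_
        by_cases hji : j = i
        · subst hji; simp only [if_pos rfl]; exact pow_ne_zero _ hi
        · simp [hji]

  obtain ⟨β, hβmem, hβne⟩ := hβ
  refine ⟨fun α => if α = ⟨β, hβmem⟩ then 1 else 0, ?_⟩
  unfold hatEval
  rw [Finset.sum_eq_single (⟨β, hβmem⟩ : expSet n d)]
  · simpa using hβne
  · intro b _ hb; simp [hb]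
  · intro h; exact absurd (Finset.mem_univ _) h

end aux3

section aux4
variable {n d : ℕ} {ι : Type*} (E I : Set ι) (g : ι → MvPolynomial (Fin n) ℝ)
  (A : Finset (Fin n → ℕ))

lemma hatEval_restrict (hsub : A ⊆ expSet n d) (c₀ : expSet n d → ℝ)
    (h0 : ∀ α : expSet n d, (α : Fin n → ℕ) ∉ A → c₀ α = 0) (x₀ : ℝ) (x : Fin n → ℝ) :
    hatEval A d (fun α => c₀ ⟨(α : Fin n → ℕ), hsub α.2⟩) x₀ x
      = hatEval (expSet n d) d c₀ x₀ x := by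
  classical
  set F : (Fin n → ℕ) → ℝ := fun α =>
    (if h : α ∈ expSet n d then c₀ ⟨α, h⟩ else 0) * x₀ ^ (d - ∑ i, α i) * mono α x with hF
  have hA : hatEval A d (fun α => c₀ ⟨(α : Fin n → ℕ), hsub α.2⟩) x₀ x = ∑ α ∈ A, F α := by
    rw [← Finset.sum_coe_sort A F]
    unfold hatEval
    refine Finset.sum_congr rfl fun α _ => ?_
    simp only [hF, dif_pos (hsub α.2)]
  have hS : hatEval (expSet n d) d c₀ x₀ x = ∑ α ∈ expSet n d, F α := by
    rw [← Finset.sum_coe_sort (expSet n d) F]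
    unfold hatEval
    refine Finset.sum_congr rfl fun α _ => ?_
    simp only [hF, dif_pos α.2]
  rw [hA, hS]
  refine Finset.sum_subset hsub fun α hα hαA => ?_
  simp only [hF, dif_pos hα]
  rw [h0 ⟨α, hα⟩ hαA, zero_mul, zero_mul]

lemma mem_tildeK_normalize (hinf : closedAtInfty E I g) {x : Fin n → ℝ}
    (hx : x ∈ semiSet E I g) :
    ∃ t : ℝ, 0 < t ∧ (t, t • x) ∈ tildeK E I g := by
  set s : ℝ := 1 + ∑ i, x i ^ 2 with hsdef
  have hs : 0 < s := by positivity
  set t : ℝ := (Real.sqrt s)⁻¹ with htdef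
  have ht : 0 < t := inv_pos.mpr (Real.sqrt_pos.mpr hs)
  have ht2 : t ^ 2 = s⁻¹ := by
    rw [htdef, inv_pow, Real.sq_sqrt hs.le]
  refine ⟨t, ht, ?_, ?_⟩
  · rw [← hinf]
    exact subset_closure (mem_tildeC_of_mem E I g hx ht)
  · show t ^ 2 + ∑ i, (t • x) i ^ 2 = 1
    have : ∑ i, (t • x) i ^ 2 = t ^ 2 * ∑ i, x i ^ 2 := by
      rw [Finset.mul_sum]
      exact Finset.sum_congr rfl fun i _ => by simp [mul_pow]
    rw [this, ← mul_one_add, ht2]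
    rw [show (1 : ℝ) + ∑ i, x i ^ 2 = s from rfl] at *
    exact inv_mul_cancel₀ hs.ne'

end aux4


/-- suppose `K` is closed at infinity, `d = deg(A)`, and some polynomial
supported on `A` lies in `int(P_d(K))`. Then `p ∈ int(P_A(K))` iff its degree-`d`
homogenization `p̂` is strictly positive on the compact set `K̃`. -/
theorem stmt11 {n d : ℕ} {ι : Type*} (E I : Set ι) (g : ι → MvPolynomial (Fin n) ℝ)
    (A : Finset (Fin n → ℕ)) (hdeg : ∀ α ∈ A, ∑ i, α i ≤ d) (hdeq : ∃ α ∈ A, ∑ i, α i = d)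
    (hinf : closedAtInfty E I g)
    (hint : ∃ c₀ : expSet n d → ℝ,
      c₀ ∈ interior {c : expSet n d → ℝ | ∀ x ∈ semiSet E I g, 0 ≤ polyD c x} ∧
      ∀ α : expSet n d, (α : Fin n → ℕ) ∉ A → c₀ α = 0)
    (c : A → ℝ) :
    c ∈ interior {c' : A → ℝ | ∀ x ∈ semiSet E I g, 0 ≤ polyA A c' x} ↔
      ∀ z ∈ tildeK E I g, 0 < hatEval A d c z.1 z.2 := by
  have hsub : A ⊆ expSet n d := fun α hα => (mem_expSet_iff α).mpr (hdeg α hα)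
  constructor
  · intro hc z hz
    obtain ⟨c₀, hc₀int, hc₀0⟩ := hint
    obtain ⟨w, hw⟩ := exists_witness_expSet E I g hz
    have hc₀int' : c₀ ∈ interior
        {c' : expSet n d → ℝ | ∀ x ∈ semiSet E I g, 0 ≤ polyA (expSet n d) c' x} := by
      simpa only [polyD_eq] using hc₀int
    have hpos0 : 0 < hatEval (expSet n d) d c₀ z.1 z.2 :=
      int_pos E I g (expSet n d) hdeg_expSet hinf hc₀int' hz w hw
    refine int_pos E I g A hdeg hinf hc hz (fun α => c₀ ⟨(α : Fin n → ℕ), hsub α.2⟩) ?_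
    rw [hatEval_restrict A hsub c₀ hc₀0]
    exact hpos0.ne'
  · intro hpos
    by_cases hKe : (tildeK E I g).Nonempty
    · obtain ⟨z₀, hz₀, hmin⟩ := (isCompact_tildeK E I g hinf).exists_isMinOn hKe
        ((continuous_hatEval A c).continuousOn)
      set ε : ℝ := hatEval A d c z₀.1 z₀.2 with hεdef
      have hε : 0 < ε := hpos z₀ hz₀
      set δ : ℝ := ε / (A.card + 1) with hδdef
      have hδ : 0 < δ := by positivity
      refine mem_interior.mpr ⟨Metric.ball c δ, ?_, Metric.isOpen_ball, Metric.mem_ball_self hδ⟩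
      intro c' hc' x hx
      obtain ⟨t, ht, hzK⟩ := mem_tildeK_normalize E I g hinf hx
      have hmin' : ε ≤ hatEval A d c t (t • x) := hmin hzK
      have hbound := abs_hatEval_le E I g A (d := d) hzK (c' - c)
      have hnorm : ‖c' - c‖ < δ := by
        rw [← dist_eq_norm]
        exact Metric.mem_ball.mp hc'
      have hsplit : hatEval A d c' t (t • x)
          = hatEval A d c t (t • x) + hatEval A d (c' - c) t (t • x) := by
        rw [← hatEval_add]
        congr 1
        abel
      have hcard : (A.card : ℝ) * ‖c' - c‖ ≤ (A.card : ℝ) * δ :=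
        mul_le_mul_of_nonneg_left hnorm.le (Nat.cast_nonneg _)
      have hεδ : ε = δ * (A.card + 1) := by
        rw [hδdef]; field_simp
      have hpos' : 0 < hatEval A d c' t (t • x) := by
        have h1 : -( (A.card : ℝ) * δ) ≤ hatEval A d (c' - c) t (t • x) := by
          have := neg_abs_le (hatEval A d (c' - c) t (t • x))
          linarith
        rw [hsplit]
        nlinarith
      rw [hatEval_scale A hdeg] at hpos'
      have : 0 < polyA A c' x := by
        by_contra hcon
        push_neg at hcon
        nlinarith [pow_pos ht d]
      exact this.le
    · -- tildeK empty: then K is empty, so the cone is everything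
      have hKemp : semiSet E I g = ∅ := by
        rw [Set.eq_empty_iff_forall_notMem]
        intro x hx
        obtain ⟨t, ht, hzK⟩ := mem_tildeK_normalize E I g hinf hx
        exact hKe ⟨_, hzK⟩
      have : {c' : A → ℝ | ∀ x ∈ semiSet E I g, 0 ≤ polyA A c' x} = Set.univ := by
        rw [Set.eq_univ_iff_forall]
        intro c' x hx
        rw [hKemp] at hx
        exact absurd hx (Set.notMem_empty x)
      rw [this, interior_univ]
      trivial
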